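/- First-order conditions for the quantum barycenter dual: let F( (u^ℓ, v^ℓ)_{ℓ=1}^L, ν ) := −Σ_ℓ w_ℓ · tr[ ρ Σ_i exp(u_i^ℓ + log μ_i^ℓ) + Σ_j ν_j v_j^ℓ + ε Σ_{i,j} exp( K̃(u^ℓ,v^ℓ)_{ij} ) ], where K̃(u,v)_{ij} := −(c_{ij} + ρ u_i + v_j)/ε. At any point where all ν_j are positive definite and all partial derivatives of F with respect to the symmetric-matrix variables u_i^ℓ, v_j^ℓ and ν_j vanish, the following hold: (i) u_i^ℓ = log( Σ_j exp(K̃(u^ℓ,v^ℓ)_{ij}) ) − log μ_i^ℓ for all i, ℓ; (ii) ν_j = Σ_i exp( K̃(u^ℓ,v^ℓ)_{ij} ), equivalently log ν_j = log( Σ_i exp(K̃(u^ℓ,v^ℓ)_{ij}) ), for all j and every ℓ; and (iii) Σ_ℓ w_ℓ v_j^ℓ = 0 for all j. -/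

import Mathlib

open Matrix

/-- Matrix exponential of a real matrix. -/
noncomputable def mexp {d : ℕ} (A : Matrix (Fin d) (Fin d) ℝ) : Matrix (Fin d) (Fin d) ℝ :=
  NormedSpace.exp A

/-- Matrix logarithm of a symmetric (hermitian) real matrix, defined through the
eigendecomposition `P = U diag(σ) Uᵀ` as `log P = U diag(log σ) Uᵀ` (junk value `0`
on non-symmetric matrices). -/
noncomputable def mlog {d : ℕ} (A : Matrix (Fin d) (Fin d) ℝ) : Matrix (Fin d) (Fin d) ℝ :=
  if h : A.IsHermitian then
    (h.eigenvectorUnitary : Matrix (Fin d) (Fin d) ℝ)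
      * diagonal (fun i => Real.log (h.eigenvalues i))
      * star (h.eigenvectorUnitary : Matrix (Fin d) (Fin d) ℝ)
  else 0

/-- Quantum (von Neumann) entropy `H(P) = -tr(P log P - P)`. -/
noncomputable def qH {d : ℕ} (P : Matrix (Fin d) (Fin d) ℝ) : ℝ :=
  -(P * mlog P - P).trace

/-- Quantum Kullback-Leibler divergence `KL(P|Q) = tr(P log P - P log Q - P + Q)`. -/
noncomputable def qKL {d : ℕ} (P Q : Matrix (Fin d) (Fin d) ℝ) : ℝ :=
  (P * mlog P - P * mlog Q - P + Q).trace

/-- The barycenter kernel `K̃(u,v)_{ij} = -(c_{ij} + ρ u_i + v_j)/ε`. -/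
noncomputable def Kt {d : ℕ} {I J : Type*}
    (c : I → J → Matrix (Fin d) (Fin d) ℝ) (ρ ε : ℝ)
    (u : I → Matrix (Fin d) (Fin d) ℝ) (v : J → Matrix (Fin d) (Fin d) ℝ)
    (i : I) (j : J) : Matrix (Fin d) (Fin d) ℝ :=
  (-ε⁻¹) • (c i j + ρ • u i + v j)

/-- The quantum barycenter dual functional
`F((u^ℓ,v^ℓ)_ℓ, ν) = -Σ_ℓ w_ℓ tr[ρ Σ_i exp(u_i^ℓ + log μ_i^ℓ) + Σ_j ν_j v_j^ℓ
  + ε Σ_{ij} exp(K̃(u^ℓ,v^ℓ)_{ij})]`. -/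
noncomputable def baryDual {d L : ℕ} {I J : Type*} [Fintype I] [Fintype J]
    (c : I → J → Matrix (Fin d) (Fin d) ℝ) (ρ ε : ℝ) (w : Fin L → ℝ)
    (μ : Fin L → I → Matrix (Fin d) (Fin d) ℝ)
    (u : Fin L → I → Matrix (Fin d) (Fin d) ℝ)
    (v : Fin L → J → Matrix (Fin d) (Fin d) ℝ)
    (ν : J → Matrix (Fin d) (Fin d) ℝ) : ℝ :=
  -∑ ℓ, w ℓ *
    (ρ * ∑ i, (mexp (u ℓ i + mlog (μ ℓ i))).trace
      + ∑ j, (ν j * v ℓ j).trace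
      + ε * ∑ i, ∑ j, (mexp (Kt c ρ ε (u ℓ) (v ℓ) i j)).trace)

namespace QB
variable {d : ℕ}

attribute [local instance] Matrix.linftyOpNormedAddCommGroup Matrix.linftyOpNormedRing
  Matrix.linftyOpNormedAlgebra

noncomputable def dpow (B V : Matrix (Fin d) (Fin d) ℝ) : ℕ → Matrix (Fin d) (Fin d) ℝ
  | 0 => 0
  | n + 1 => V * B ^ n + B * dpow B V n

lemma dpow_eq (B V : Matrix (Fin d) (Fin d) ℝ) (n : ℕ) :
    dpow B V n = ∑ k ∈ Finset.range n, B ^ k * V * B ^ (n - 1 - k) := by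
  induction n with
  | zero => simp [dpow]
  | succ n ih =>
      rw [dpow, ih, Finset.sum_range_succ']
      simp only [pow_zero, one_mul, Nat.add_sub_cancel, Nat.sub_zero]
      rw [add_comm, Finset.mul_sum]
      congr 1
      apply Finset.sum_congr rfl
      intro k hk
      rw [show n - (k + 1) = n - 1 - k by omega]
      simp [pow_succ', mul_assoc]

lemma trace_dpow (B V : Matrix (Fin d) (Fin d) ℝ) (n : ℕ) :
    (dpow B V n).trace = n * (B ^ (n - 1) * V).trace := by
  rw [dpow_eq, Matrix.trace_sum]
  have : ∀ k ∈ Finset.range n, (B ^ k * V * B ^ (n - 1 - k)).trace = (B ^ (n - 1) * V).trace := by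
    intro k hk
    have hk' := Finset.mem_range.mp hk
    rw [Matrix.trace_mul_comm, ← mul_assoc, ← pow_add]
    congr 3
    omega
  rw [Finset.sum_congr rfl this, Finset.sum_const, Finset.card_range, nsmul_eq_mul]

lemma norm_pow_le_aux (B : Matrix (Fin d) (Fin d) ℝ) (R : ℝ) (hB : ‖B‖ ≤ R) (hR : 1 ≤ R) (n : ℕ) :
    ‖B ^ n‖ ≤ R ^ n := by
  induction n with
  | zero =>
      simp only [pow_zero]
      rw [← Matrix.diagonal_one, Matrix.linfty_opNorm_diagonal]
      exact pi_norm_le_iff_of_nonneg zero_le_one |>.2 fun i => by simp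
  | succ n ih =>
      calc ‖B ^ (n + 1)‖ = ‖B ^ n * B‖ := by rw [pow_succ]
        _ ≤ ‖B ^ n‖ * ‖B‖ := norm_mul_le _ _
        _ ≤ R ^ n * R := by
            apply mul_le_mul ih hB (norm_nonneg _)
            positivity
        _ = R ^ (n + 1) := by rw [pow_succ]

lemma norm_dpow_le (B V : Matrix (Fin d) (Fin d) ℝ) (R : ℝ) (hB : ‖B‖ ≤ R) (hR : 1 ≤ R) (n : ℕ) :
    ‖dpow B V n‖ ≤ n * ‖V‖ * R ^ n := by
  induction n with
  | zero => simp [dpow]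
  | succ n ih =>
      have h0 : (0:ℝ) ≤ R := le_trans zero_le_one hR
      calc ‖dpow B V (n+1)‖ ≤ ‖V * B ^ n‖ + ‖B * dpow B V n‖ := norm_add_le _ _
        _ ≤ ‖V‖ * R ^ n + R * (n * ‖V‖ * R ^ n) := by
            gcongr
            · calc ‖V * B ^ n‖ ≤ ‖V‖ * ‖B ^ n‖ := norm_mul_le _ _
                _ ≤ ‖V‖ * R ^ n := by gcongr; exact norm_pow_le_aux B R hB hR n
            · calc ‖B * dpow B V n‖ ≤ ‖B‖ * ‖dpow B V n‖ := norm_mul_le _ _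
                _ ≤ R * (n * ‖V‖ * R ^ n) := mul_le_mul hB ih (norm_nonneg _) h0
        _ ≤ (↑(n+1)) * ‖V‖ * R ^ (n+1) := by
            rw [pow_succ]
            push_cast
            nlinarith [norm_nonneg V, pow_nonneg h0 n,
              mul_nonneg (mul_nonneg (norm_nonneg V) (pow_nonneg h0 n)) h0]


lemma hasDerivAt_trace_mexp (A V : Matrix (Fin d) (Fin d) ℝ) :
    HasDerivAt (fun t : ℝ => (mexp (A + t • V)).trace) ((mexp A * V).trace) 0 := by
  classical
  letI : TopologicalSpace (Matrix (Fin d) (Fin d) ℝ) := PseudoMetricSpace.toUniformSpace.toTopologicalSpace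
  set T : Matrix (Fin d) (Fin d) ℝ →L[ℝ] ℝ :=
    LinearMap.toContinuousLinearMap (Matrix.traceLinearMap (Fin d) ℝ ℝ) with hT
  have hTapp : ∀ M : Matrix (Fin d) (Fin d) ℝ, T M = M.trace := fun M => rfl
  set R : ℝ := ‖A‖ + ‖V‖ + 1 with hRdef
  have hR1 : 1 ≤ R := by
    have := norm_nonneg A; have := norm_nonneg V; simp only [hRdef]; linarith
  set X : ℝ → Matrix (Fin d) (Fin d) ℝ := fun t => A + t • V with hXdef
  have hX0 : X 0 = A := by simp [hXdef]
  have hXd : ∀ t : ℝ, HasDerivAt X V t := by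
    intro t
    exact (((hasDerivAt_id t).smul_const V).const_add A).congr_deriv (one_smul _ _)
  have hXnorm : ∀ t ∈ Metric.ball (0:ℝ) 1, ‖X t‖ ≤ R := by
    intro t ht
    have ht' : |t| < 1 := by simpa [Real.norm_eq_abs] using Metric.mem_ball.mp ht
    calc ‖A + t • V‖ ≤ ‖A‖ + ‖t • V‖ := norm_add_le _ _
      _ = ‖A‖ + |t| * ‖V‖ := by rw [norm_smul, Real.norm_eq_abs]
      _ ≤ ‖A‖ + 1 * ‖V‖ := by gcongr
      _ ≤ R := by rw [one_mul, hRdef]; linarith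
  have hpow : ∀ (n : ℕ) (t : ℝ), HasDerivAt (fun s => X s ^ n) (dpow (X t) V n) t := by
    intro n
    induction n with
    | zero => intro t; simpa [dpow] using hasDerivAt_const t (1 : Matrix (Fin d) (Fin d) ℝ)
    | succ n ih =>
        intro t
        have := (hXd t).mul (ih t)
        simp only [pow_succ']
        exact this
  set g : ℕ → ℝ → ℝ := fun n t => ((n.factorial : ℝ))⁻¹ * (X t ^ n).trace with hg_def
  set g' : ℕ → ℝ → ℝ := fun n t => ((n.factorial : ℝ))⁻¹ * (dpow (X t) V n).trace with hg'_def
  set u : ℕ → ℝ := fun n => ((n.factorial : ℝ))⁻¹ * (‖T‖ * (n * ‖V‖ * R ^ n)) with hu_def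
  have hsum : Summable u := by
    apply (summable_nat_add_iff 1).mp
    have heq : ∀ n : ℕ, u (n + 1) = R ^ n / n.factorial * (‖T‖ * ‖V‖ * R) := by
      intro n
      have hf : (((n+1).factorial : ℕ) : ℝ) = ((n:ℝ)+1) * (n.factorial : ℝ) := by
        rw [Nat.factorial_succ]; push_cast; ring
      have h2 : (n.factorial : ℝ) ≠ 0 := Nat.cast_ne_zero.2 n.factorial_ne_zero
      have h3 : ((n:ℝ)+1) ≠ 0 := by positivity
      simp only [hu_def, hf]
      push_cast
      field_simp
      ring
    simp only [heq]
    exact (Real.summable_pow_div_factorial R).mul_right _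
  have hgd : ∀ (n : ℕ), ∀ y : ℝ, HasDerivAt (g n) (g' n y) y := by
    intro n y
    have hc := HasFDerivAt.comp_hasDerivAt y T.hasFDerivAt (hpow n y)
    simpa [hg_def, hg'_def, Function.comp, hTapp] using hc.const_mul ((n.factorial : ℝ))⁻¹
  have hg' : ∀ (n : ℕ), ∀ y ∈ Metric.ball (0:ℝ) 1, ‖g' n y‖ ≤ u n := by
    intro n y hy
    have h1 : |(dpow (X y) V n).trace| ≤ ‖T‖ * ‖dpow (X y) V n‖ := by
      have := T.le_opNorm (dpow (X y) V n)
      simpa [hTapp, Real.norm_eq_abs] using this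
    have h2 : ‖dpow (X y) V n‖ ≤ n * ‖V‖ * R ^ n :=
      norm_dpow_le (X y) V R (hXnorm y hy) hR1 n
    have h3 : (0:ℝ) ≤ ((n.factorial : ℝ))⁻¹ := by positivity
    calc ‖g' n y‖ = ((n.factorial : ℝ))⁻¹ * |(dpow (X y) V n).trace| := by
          simp [hg'_def, Real.norm_eq_abs, abs_mul, abs_of_nonneg h3]
      _ ≤ ((n.factorial : ℝ))⁻¹ * (‖T‖ * (n * ‖V‖ * R ^ n)) := by
          apply mul_le_mul_of_nonneg_left _ h3
          calc |(dpow (X y) V n).trace| ≤ ‖T‖ * ‖dpow (X y) V n‖ := h1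
            _ ≤ ‖T‖ * (n * ‖V‖ * R ^ n) := by
                apply mul_le_mul_of_nonneg_left h2 (norm_nonneg _)
      _ = u n := rfl
  have htr_tsum : ∀ M : Matrix (Fin d) (Fin d) ℝ,
      (mexp M).trace = ∑' n : ℕ, ((n.factorial : ℝ))⁻¹ * (M ^ n).trace := by
    intro M
    have hS := NormedSpace.expSeries_summable' (𝕂 := ℝ) M
    have : mexp M = ∑' n : ℕ, ((n.factorial : ℝ))⁻¹ • M ^ n := by
      rw [mexp, NormedSpace.exp_eq_tsum ℝ]; rfl
    rw [this, ← hTapp, T.map_tsum hS]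
    congr 1
    funext n
    simp [_root_.map_smul, hTapp, smul_eq_mul]
  have hg0 : Summable fun n => g n 0 := by
    have hS := NormedSpace.expSeries_summable' (𝕂 := ℝ) (X 0)
    have hmap := hS.map T.toLinearMap.toAddMonoidHom T.continuous
    have : (fun n => g n 0) = fun n => T (((n.factorial : ℝ))⁻¹ • X 0 ^ n) := by
      funext n; simp [hg_def, _root_.map_smul, hTapp, smul_eq_mul]
    rw [this]; exact hmap
  have h01 : (0:ℝ) ∈ Metric.ball (0:ℝ) 1 := Metric.mem_ball_self one_pos
  have main := hasDerivAt_tsum_of_isPreconnected hsum Metric.isOpen_ball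
    (convex_ball (0:ℝ) 1).isPreconnected (fun n y _ => hgd n y)
    (fun n y hy => hg' n y hy) h01 hg0 h01
  have hfun : (fun z : ℝ => ∑' n : ℕ, g n z) = fun t : ℝ => (mexp (A + t • V)).trace := by
    funext z
    rw [htr_tsum (A + z • V)]
  have hsum0 : Summable (fun n => g' n 0) :=
    Summable.of_norm_bounded hsum (fun n => hg' n 0 h01)
  have hval : (∑' n : ℕ, g' n 0) = (mexp A * V).trace := by
    rw [Summable.tsum_eq_zero_add hsum0]
    have hzero : g' 0 0 = 0 := by simp [hg'_def, dpow]
    have hsucc : ∀ n : ℕ, g' (n + 1) 0 = ((n.factorial : ℝ))⁻¹ * (A ^ n * V).trace := by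
      intro n
      have hf : (((n+1).factorial : ℕ) : ℝ) = ((n:ℝ)+1) * (n.factorial : ℝ) := by
        rw [Nat.factorial_succ]; push_cast; ring
      have h2 : (n.factorial : ℝ) ≠ 0 := Nat.cast_ne_zero.2 n.factorial_ne_zero
      have h3 : ((n:ℝ)+1) ≠ 0 := by positivity
      simp only [hg'_def, trace_dpow, hX0, Nat.add_sub_cancel, hf]
      push_cast
      field_simp
    simp only [hzero, hsucc, zero_add]
    -- now: ∑' n, (n!)⁻¹ * (A^n * V).trace = (mexp A * V).trace
    set T2 : Matrix (Fin d) (Fin d) ℝ →L[ℝ] ℝ :=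
      LinearMap.toContinuousLinearMap
        ((Matrix.traceLinearMap (Fin d) ℝ ℝ).comp (LinearMap.mulRight ℝ V)) with hT2
    have hT2app : ∀ M : Matrix (Fin d) (Fin d) ℝ, T2 M = (M * V).trace := fun M => rfl
    have hS := NormedSpace.expSeries_summable' (𝕂 := ℝ) A
    have hexp : mexp A = ∑' n : ℕ, ((n.factorial : ℝ))⁻¹ • A ^ n := by
      rw [mexp, NormedSpace.exp_eq_tsum ℝ]; rfl
    rw [← hT2app, hexp, T2.map_tsum hS]
    congr 1
    funext n
    simp [_root_.map_smul, hT2app, smul_eq_mul]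
  rw [hfun, hval] at main
  exact main

section FunCalc

lemma conj_pow (U B : Matrix (Fin d) (Fin d) ℝ) (hU : U * star U = 1) (hU' : star U * U = 1)
    (n : ℕ) : (U * B * star U) ^ n = U * B ^ n * star U := by
  induction n with
  | zero => simp only [pow_zero, Matrix.mul_one]; rw [hU]
  | succ n ih =>
      calc (U * B * star U) ^ (n+1) = (U * B ^ n * star U) * (U * B * star U) := by
            rw [pow_succ, ih]
        _ = U * B ^ n * (star U * U) * B * star U := by noncomm_ring
        _ = U * (B ^ n * B) * star U := by rw [hU']; noncomm_ring
        _ = U * B ^ (n+1) * star U := by rw [pow_succ]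

lemma diag_sum_smul (σ : Fin d → ℝ) (N : ℕ) (c : ℕ → ℝ) :
    ∑ k ∈ Finset.range N, c k • Matrix.diagonal (fun i => σ i ^ k)
      = Matrix.diagonal (fun i => ∑ k ∈ Finset.range N, c k * σ i ^ k) := by
  ext i j
  by_cases h : i = j
  · subst h
    simp [Matrix.sum_apply, Matrix.diagonal_apply_eq, smul_eq_mul]
  · simp [Matrix.sum_apply, Matrix.diagonal_apply_ne _ h, h, smul_eq_mul]

lemma unitary_conj_poly_sum (U : Matrix (Fin d) (Fin d) ℝ) (hU : U * star U = 1)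
    (hU' : star U * U = 1) (σ : Fin d → ℝ) (N : ℕ) (c : ℕ → ℝ) :
    ∑ k ∈ Finset.range N, c k • (U * Matrix.diagonal σ * star U) ^ k
      = U * Matrix.diagonal (fun i => ∑ k ∈ Finset.range N, c k * σ i ^ k) * star U := by
  have step : ∀ k : ℕ, c k • (U * Matrix.diagonal σ * star U) ^ k
      = U * (c k • Matrix.diagonal (fun i => σ i ^ k)) * star U := by
    intro k
    rw [conj_pow U _ hU hU']
    have hd : (Matrix.diagonal σ) ^ k = Matrix.diagonal (fun i => σ i ^ k) := by
      rw [Matrix.diagonal_pow]; rfl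
    rw [hd, mul_smul_comm, smul_mul_assoc]
  rw [Finset.sum_congr rfl (fun k _ => step k), ← Finset.sum_mul, ← Finset.mul_sum,
    diag_sum_smul]

lemma funcalc_welldef (g : ℝ → ℝ) (U₁ U₂ : Matrix (Fin d) (Fin d) ℝ) (σ₁ σ₂ : Fin d → ℝ)
    (h₁ : U₁ * star U₁ = 1) (h₁' : star U₁ * U₁ = 1)
    (h₂ : U₂ * star U₂ = 1) (h₂' : star U₂ * U₂ = 1)
    (hEq : U₁ * Matrix.diagonal σ₁ * star U₁ = U₂ * Matrix.diagonal σ₂ * star U₂) :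
    U₁ * Matrix.diagonal (fun i => g (σ₁ i)) * star U₁
      = U₂ * Matrix.diagonal (fun i => g (σ₂ i)) * star U₂ := by
  classical
  set s : Finset ℝ := Finset.image σ₁ Finset.univ ∪ Finset.image σ₂ Finset.univ with hs
  set p : Polynomial ℝ := Lagrange.interpolate s id g with hp
  have hps : ∀ x ∈ s, p.eval x = g x := fun x hx =>
    Lagrange.eval_interpolate_at_node g (Set.injOn_id _) hx
  set N : ℕ := p.natDegree + 1 with hN
  set c : ℕ → ℝ := fun k => p.coeff k with hc
  have hev : ∀ x ∈ s, ∑ k ∈ Finset.range N, c k * x ^ k = g x := by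
    intro x hx
    rw [← Polynomial.eval_eq_sum_range]
    exact hps x hx
  have e1 := unitary_conj_poly_sum U₁ h₁ h₁' σ₁ N c
  have e2 := unitary_conj_poly_sum U₂ h₂ h₂' σ₂ N c
  rw [hEq] at e1
  have key := e1.symm.trans e2
  have d1 : (Matrix.diagonal (fun i => ∑ k ∈ Finset.range N, c k * σ₁ i ^ k))
      = Matrix.diagonal (fun i => g (σ₁ i)) := by
    rw [show (fun i => ∑ k ∈ Finset.range N, c k * σ₁ i ^ k) = (fun i => g (σ₁ i)) from
      funext fun i => hev (σ₁ i)
        (Finset.mem_union_left _ (Finset.mem_image_of_mem σ₁ (Finset.mem_univ i)))]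
  have d2 : (Matrix.diagonal (fun i => ∑ k ∈ Finset.range N, c k * σ₂ i ^ k))
      = Matrix.diagonal (fun i => g (σ₂ i)) := by
    rw [show (fun i => ∑ k ∈ Finset.range N, c k * σ₂ i ^ k) = (fun i => g (σ₂ i)) from
      funext fun i => hev (σ₂ i)
        (Finset.mem_union_right _ (Finset.mem_image_of_mem σ₂ (Finset.mem_univ i)))]
  rw [d1, d2] at key
  exact key

lemma mexp_conj_unitary (U B : Matrix (Fin d) (Fin d) ℝ) (hU : U * star U = 1)
    (hU' : star U * U = 1) : mexp (U * B * star U) = U * mexp B * star U := by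
  have hunit : IsUnit U := ⟨⟨U, star U, hU, hU'⟩, rfl⟩
  have hinv : U⁻¹ = star U := Matrix.inv_eq_left_inv hU'
  rw [mexp, mexp, ← hinv, Matrix.exp_conj U B hunit]

lemma mexp_diagonal (σ : Fin d → ℝ) :
    mexp (Matrix.diagonal σ) = Matrix.diagonal (fun i => Real.exp (σ i)) := by
  rw [mexp, Matrix.exp_diagonal, Pi.exp_def]
  congr 1
  funext i
  rw [Real.exp_eq_exp_ℝ]

lemma mexp_isHermitian {A : Matrix (Fin d) (Fin d) ℝ} (hA : A.IsHermitian) :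
    (mexp A).IsHermitian := by
  have : (mexp A)ᴴ = mexp Aᴴ := by rw [mexp, mexp, Matrix.exp_conjTranspose]
  unfold Matrix.IsHermitian at *
  rw [this, hA]

lemma spectral_real {A : Matrix (Fin d) (Fin d) ℝ} (hA : A.IsHermitian) :
    A = (hA.eigenvectorUnitary : Matrix (Fin d) (Fin d) ℝ)
      * Matrix.diagonal hA.eigenvalues
      * star (hA.eigenvectorUnitary : Matrix (Fin d) (Fin d) ℝ) := by
  have := hA.spectral_theorem
  rwa [RCLike.ofReal_real_eq_id, Function.id_comp] at this

lemma mexp_hermitian_decomp {A : Matrix (Fin d) (Fin d) ℝ} (hA : A.IsHermitian) :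
    mexp A = (hA.eigenvectorUnitary : Matrix (Fin d) (Fin d) ℝ)
      * Matrix.diagonal (fun i => Real.exp (hA.eigenvalues i))
      * star (hA.eigenvectorUnitary : Matrix (Fin d) (Fin d) ℝ) := by
  have h1 := hA.eigenvectorUnitary.prop
  rw [Unitary.mem_iff] at h1
  conv_lhs => rw [spectral_real hA]
  rw [mexp_conj_unitary _ _ h1.2 h1.1, mexp_diagonal]

lemma mlog_mexp {A : Matrix (Fin d) (Fin d) ℝ} (hA : A.IsHermitian) : mlog (mexp A) = A := by
  have hP : (mexp A).IsHermitian := mexp_isHermitian hA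
  have hUP := hP.eigenvectorUnitary.prop
  rw [Unitary.mem_iff] at hUP
  have hUA := hA.eigenvectorUnitary.prop
  rw [Unitary.mem_iff] at hUA
  have hEq : (hP.eigenvectorUnitary : Matrix (Fin d) (Fin d) ℝ)
      * Matrix.diagonal hP.eigenvalues * star (hP.eigenvectorUnitary : Matrix (Fin d) (Fin d) ℝ)
      = (hA.eigenvectorUnitary : Matrix (Fin d) (Fin d) ℝ)
      * Matrix.diagonal (fun i => Real.exp (hA.eigenvalues i))
      * star (hA.eigenvectorUnitary : Matrix (Fin d) (Fin d) ℝ) :=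
    (spectral_real hP).symm.trans (mexp_hermitian_decomp hA)
  have key := funcalc_welldef Real.log _ _ _ _ hUP.2 hUP.1 hUA.2 hUA.1 hEq
  rw [mlog, dif_pos hP]
  rw [key]
  have : (fun i => Real.log (Real.exp (hA.eigenvalues i))) = hA.eigenvalues := by
    funext i; exact Real.log_exp _
  rw [this]
  exact (spectral_real hA).symm

lemma mlog_isHermitian (P : Matrix (Fin d) (Fin d) ℝ) : (mlog P).IsHermitian := by
  rw [mlog]
  split_ifs with h
  · have h1 := h.eigenvectorUnitary.prop
    unfold Matrix.IsHermitian
    simp [Matrix.conjTranspose_mul, Matrix.star_eq_conjTranspose,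
      Matrix.conjTranspose_conjTranspose, Matrix.diagonal_conjTranspose, mul_assoc]
  · exact Matrix.isHermitian_zero

lemma herm_eq_zero_of_trace_test {M : Matrix (Fin d) (Fin d) ℝ} (hM : M.IsHermitian)
    (h : ∀ V : Matrix (Fin d) (Fin d) ℝ, V.IsHermitian → (M * V).trace = 0) : M = 0 := by
  have h2 := h M hM
  have htr : (M * M).trace = ∑ i, ∑ j, M i j * M i j := by
    rw [Matrix.trace]
    simp only [Matrix.diag, Matrix.mul_apply]
    refine Finset.sum_congr rfl fun i _ => Finset.sum_congr rfl fun j _ => ?_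
    have := hM.apply j i
    rw [star_trivial] at this
    rw [this]
  rw [htr] at h2
  have hz : ∀ i ∈ Finset.univ, ∀ j ∈ Finset.univ, M i j * M i j = 0 := by
    have := (Finset.sum_eq_zero_iff_of_nonneg
      (fun i _ => Finset.sum_nonneg fun j _ => mul_self_nonneg (M i j))).mp h2
    intro i hi j hj
    exact (Finset.sum_eq_zero_iff_of_nonneg (fun j _ => mul_self_nonneg (M i j))).mp
      (this i hi) j hj
  ext i j
  have := hz i (Finset.mem_univ i) j (Finset.mem_univ j)
  simpa [mul_self_eq_zero] using this

end FunCalc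

lemma isHermitian_smul_real {A : Matrix (Fin d) (Fin d) ℝ} (hA : A.IsHermitian) (r : ℝ) :
    (r • A).IsHermitian := by
  unfold Matrix.IsHermitian at *
  rw [Matrix.conjTranspose_smul, star_trivial, hA]

lemma isHermitian_sum {ι : Type*} (s : Finset ι) (f : ι → Matrix (Fin d) (Fin d) ℝ)
    (h : ∀ i ∈ s, (f i).IsHermitian) : (∑ i ∈ s, f i).IsHermitian :=
  Finset.sum_induction f _ (fun _ _ ha hb => ha.add hb) Matrix.isHermitian_zero h

lemma sum_affine_eq {n : ℕ} (w P a : Fin n → ℝ) (t : ℝ) :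
    -∑ ℓ, w ℓ * (P ℓ + t * a ℓ) = -∑ ℓ, w ℓ * P ℓ + t * (-∑ ℓ, w ℓ * a ℓ) := by
  have h : ∀ ℓ, w ℓ * (P ℓ + t * a ℓ) = w ℓ * P ℓ + t * (w ℓ * a ℓ) := fun ℓ => by ring
  rw [Finset.sum_congr rfl (fun ℓ _ => h ℓ), Finset.sum_add_distrib, ← Finset.mul_sum]
  ring

lemma sum_affine_eq' {n : ℕ} (w A S C a : Fin n → ℝ) (t : ℝ) :
    -∑ ℓ, w ℓ * (A ℓ + (S ℓ + t * a ℓ) + C ℓ)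
      = -∑ ℓ, w ℓ * (A ℓ + S ℓ + C ℓ) + t * (-∑ ℓ, w ℓ * a ℓ) := by
  have h : ∀ ℓ, w ℓ * (A ℓ + (S ℓ + t * a ℓ) + C ℓ)
      = w ℓ * (A ℓ + S ℓ + C ℓ) + t * (w ℓ * a ℓ) := fun ℓ => by ring
  rw [Finset.sum_congr rfl (fun ℓ _ => h ℓ), Finset.sum_add_distrib, ← Finset.mul_sum]
  ring

end QB

/-- **First-order conditions for the quantum barycenter dual.** At any point where all
`ν_j` are positive definite and all partial derivatives of `F` with respect to the
symmetric-matrix variables `u_i^ℓ`, `v_j^ℓ` and `ν_j` vanish (expressed through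
directional derivatives along symmetric directions), one has
(i) `u_i^ℓ = log(Σ_j exp(K̃(u^ℓ,v^ℓ)_{ij})) - log μ_i^ℓ`;
(ii) `ν_j = Σ_i exp(K̃(u^ℓ,v^ℓ)_{ij})` for every `ℓ`; and
(iii) `Σ_ℓ w_ℓ v_j^ℓ = 0`. -/
theorem quantum_barycenter_first_order {d L : ℕ} {I J : Type*}
    [Fintype I] [Fintype J] [DecidableEq I] [DecidableEq J]
    (c : I → J → Matrix (Fin d) (Fin d) ℝ) (hc : ∀ i j, (c i j).IsHermitian)
    (ρ ε : ℝ) (hρ : 0 < ρ) (hε : 0 < ε)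
    (w : Fin L → ℝ) (hw : ∀ ℓ, 0 < w ℓ) (hw1 : ∑ ℓ, w ℓ = 1)
    (μ : Fin L → I → Matrix (Fin d) (Fin d) ℝ) (hμ : ∀ ℓ i, (μ ℓ i).PosDef)
    (u : Fin L → I → Matrix (Fin d) (Fin d) ℝ)
    (v : Fin L → J → Matrix (Fin d) (Fin d) ℝ)
    (ν : J → Matrix (Fin d) (Fin d) ℝ)
    (hu : ∀ ℓ i, (u ℓ i).IsHermitian) (hv : ∀ ℓ j, (v ℓ j).IsHermitian)
    (hν : ∀ j, (ν j).PosDef)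
    (hdu : ∀ (ℓ : Fin L) (i : I) (V : Matrix (Fin d) (Fin d) ℝ), V.IsHermitian →
      HasDerivAt (fun t : ℝ => baryDual c ρ ε w μ
          (fun ℓ' i' => u ℓ' i' + if ℓ' = ℓ ∧ i' = i then t • V else 0) v ν) 0 0)
    (hdv : ∀ (ℓ : Fin L) (j : J) (V : Matrix (Fin d) (Fin d) ℝ), V.IsHermitian →
      HasDerivAt (fun t : ℝ => baryDual c ρ ε w μ u
          (fun ℓ' j' => v ℓ' j' + if ℓ' = ℓ ∧ j' = j then t • V else 0) ν) 0 0)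
    (hdν : ∀ (j : J) (V : Matrix (Fin d) (Fin d) ℝ), V.IsHermitian →
      HasDerivAt (fun t : ℝ => baryDual c ρ ε w μ u v
          (fun j' => ν j' + if j' = j then t • V else 0)) 0 0) :
    (∀ ℓ i, u ℓ i = mlog (∑ j, mexp (Kt c ρ ε (u ℓ) (v ℓ) i j)) - mlog (μ ℓ i)) ∧
    (∀ j (ℓ : Fin L), ν j = ∑ i, mexp (Kt c ρ ε (u ℓ) (v ℓ) i j)) ∧
    (∀ j, ∑ ℓ, w ℓ • v ℓ j = 0) := by
  classical
  have hεne : ε ≠ 0 := ne_of_gt hε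
  have hρne : ρ ≠ 0 := ne_of_gt hρ
  have hKherm : ∀ (ℓ : Fin L) (i : I) (j : J), (Kt c ρ ε (u ℓ) (v ℓ) i j).IsHermitian := by
    intro ℓ i j
    exact QB.isHermitian_smul_real
      (((hc i j).add (QB.isHermitian_smul_real (hu ℓ i) ρ)).add (hv ℓ j)) _
  have hSherm : ∀ (ℓ : Fin L) (j : J),
      (∑ i, mexp (Kt c ρ ε (u ℓ) (v ℓ) i j)).IsHermitian :=
    fun ℓ j => QB.isHermitian_sum _ _ (fun i _ => QB.mexp_isHermitian (hKherm ℓ i j))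
  have hSherm' : ∀ (ℓ : Fin L) (i : I),
      (∑ j, mexp (Kt c ρ ε (u ℓ) (v ℓ) i j)).IsHermitian :=
    fun ℓ i => QB.isHermitian_sum _ _ (fun j _ => QB.mexp_isHermitian (hKherm ℓ i j))
  -- Part (iii)
  have part3 : ∀ j : J, ∑ ℓ, w ℓ • v ℓ j = 0 := by
    intro j0
    have hherm : (∑ ℓ, w ℓ • v ℓ j0).IsHermitian :=
      QB.isHermitian_sum _ _ (fun ℓ _ => QB.isHermitian_smul_real (hv ℓ j0) (w ℓ))
    apply QB.herm_eq_zero_of_trace_test hherm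
    intro V hV
    have hpt : ∀ t : ℝ, baryDual c ρ ε w μ u v (fun j' => ν j' + if j' = j0 then t • V else 0)
        = baryDual c ρ ε w μ u v ν + t * (-∑ ℓ, w ℓ * (V * v ℓ j0).trace) := by
      intro t
      unfold baryDual
      have hMid : ∀ ℓ : Fin L, ∑ j', ((ν j' + if j' = j0 then t • V else 0) * v ℓ j').trace
          = (∑ j', (ν j' * v ℓ j').trace) + t * (V * v ℓ j0).trace := by
        intro ℓ
        have h1 : ∀ j', ((ν j' + if j' = j0 then t • V else 0) * v ℓ j').trace
            = (ν j' * v ℓ j').trace + (if j' = j0 then t * (V * v ℓ j').trace else 0) := by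
          intro j'
          rw [Matrix.add_mul, Matrix.trace_add]
          congr 1
          split_ifs with h
          · rw [Matrix.smul_mul, Matrix.trace_smul, smul_eq_mul]
          · rw [Matrix.zero_mul, Matrix.trace_zero]
        rw [Finset.sum_congr rfl fun j' _ => h1 j', Finset.sum_add_distrib,
          Finset.sum_ite_eq' Finset.univ j0, if_pos (Finset.mem_univ _)]
      simp only [hMid]
      exact QB.sum_affine_eq' w
        (fun ℓ => ρ * ∑ i, (mexp (u ℓ i + mlog (μ ℓ i))).trace)
        (fun ℓ => ∑ j', (ν j' * v ℓ j').trace)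
        (fun ℓ => ε * ∑ i, ∑ j', (mexp (Kt c ρ ε (u ℓ) (v ℓ) i j')).trace)
        (fun ℓ => (V * v ℓ j0).trace) t
    have hD : HasDerivAt (fun t : ℝ => baryDual c ρ ε w μ u v ν
        + t * (-∑ ℓ, w ℓ * (V * v ℓ j0).trace)) (-∑ ℓ, w ℓ * (V * v ℓ j0).trace) 0 := by
      simpa using ((hasDerivAt_id (0:ℝ)).mul_const
        (-∑ ℓ, w ℓ * (V * v ℓ j0).trace)).const_add (baryDual c ρ ε w μ u v ν)
    have hD' := hD.congr_of_eventuallyEq (Filter.Eventually.of_forall hpt)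
    have hzero := hD'.unique (hdν j0 V hV)
    have h0 : ∑ ℓ, w ℓ * (V * v ℓ j0).trace = 0 := neg_eq_zero.mp hzero
    calc ((∑ ℓ, w ℓ • v ℓ j0) * V).trace
        = ∑ ℓ, w ℓ * (V * v ℓ j0).trace := by
          rw [Matrix.sum_mul, Matrix.trace_sum]
          refine Finset.sum_congr rfl fun ℓ _ => ?_
          rw [Matrix.smul_mul, Matrix.trace_smul, smul_eq_mul, Matrix.trace_mul_comm]
      _ = 0 := h0
  -- Part (ii)
  have part2 : ∀ (j0 : J) (ℓ0 : Fin L), ν j0 = ∑ i, mexp (Kt c ρ ε (u ℓ0) (v ℓ0) i j0) := by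
    intro j0 ℓ0
    have key : ∀ V : Matrix (Fin d) (Fin d) ℝ, V.IsHermitian →
        ((ν j0 - ∑ i, mexp (Kt c ρ ε (u ℓ0) (v ℓ0) i j0)) * V).trace = 0 := by
      intro V hV
      set Wv : Fin L → J → Matrix (Fin d) (Fin d) ℝ :=
        fun ℓ j' => if ℓ = ℓ0 ∧ j' = j0 then (-ε⁻¹) • V else 0 with hWv
      set b : Fin L → ℝ := fun ℓ => if ℓ = ℓ0 then (ν j0 * V).trace else 0 with hb
      have hD : HasDerivAt (fun t : ℝ => -∑ ℓ, w ℓ *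
          ((ρ * ∑ i, (mexp (u ℓ i + mlog (μ ℓ i))).trace)
            + ((∑ j', (ν j' * v ℓ j').trace) + t * b ℓ)
            + ε * ∑ i, ∑ j', (mexp (Kt c ρ ε (u ℓ) (v ℓ) i j' + t • Wv ℓ j')).trace))
          (-∑ ℓ, w ℓ * (0 + b ℓ + ε * ∑ i, ∑ j',
            (mexp (Kt c ρ ε (u ℓ) (v ℓ) i j') * Wv ℓ j').trace)) 0 := by
        apply HasDerivAt.neg
        apply HasDerivAt.fun_sum
        intro ℓ _
        apply HasDerivAt.const_mul
        apply HasDerivAt.add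
        apply HasDerivAt.add
        · exact hasDerivAt_const _ _
        · simpa using ((hasDerivAt_id (0:ℝ)).mul_const (b ℓ)).const_add
            (∑ j', (ν j' * v ℓ j').trace)
        · apply HasDerivAt.const_mul
          apply HasDerivAt.fun_sum
          intro i _
          apply HasDerivAt.fun_sum
          intro j' _
          exact QB.hasDerivAt_trace_mexp _ _
      have hpt : ∀ t : ℝ, baryDual c ρ ε w μ u
          (fun ℓ' j' => v ℓ' j' + if ℓ' = ℓ0 ∧ j' = j0 then t • V else 0) ν
          = -∑ ℓ, w ℓ * ((ρ * ∑ i, (mexp (u ℓ i + mlog (μ ℓ i))).trace)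
            + ((∑ j', (ν j' * v ℓ j').trace) + t * b ℓ)
            + ε * ∑ i, ∑ j', (mexp (Kt c ρ ε (u ℓ) (v ℓ) i j' + t • Wv ℓ j')).trace) := by
        intro t
        have hKtEq : ∀ (ℓ : Fin L) (i : I) (j' : J),
            Kt c ρ ε (u ℓ) (fun j'' => v ℓ j'' + if ℓ = ℓ0 ∧ j'' = j0 then t • V else 0) i j'
              = Kt c ρ ε (u ℓ) (v ℓ) i j' + t • Wv ℓ j' := by
          intro ℓ i j'
          unfold Kt
          by_cases hP : ℓ = ℓ0 ∧ j' = j0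
          · simp only [hWv, if_pos hP, smul_add]
            module
          · simp [hWv, hP]
        have hMid : ∀ ℓ : Fin L,
            ∑ j', (ν j' * (v ℓ j' + if ℓ = ℓ0 ∧ j' = j0 then t • V else 0)).trace
              = (∑ j', (ν j' * v ℓ j').trace) + t * b ℓ := by
          intro ℓ
          have h1 : ∀ j', (ν j' * (v ℓ j' + if ℓ = ℓ0 ∧ j' = j0 then t • V else 0)).trace
              = (ν j' * v ℓ j').trace + (if ℓ = ℓ0 ∧ j' = j0 then t * (ν j' * V).trace else 0) := by
            intro j'
            rw [Matrix.mul_add, Matrix.trace_add]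
            congr 1
            split_ifs with h
            · rw [mul_smul_comm, Matrix.trace_smul, smul_eq_mul]
            · rw [Matrix.mul_zero, Matrix.trace_zero]
          rw [Finset.sum_congr rfl fun j' _ => h1 j', Finset.sum_add_distrib]
          congr 1
          by_cases hℓ : ℓ = ℓ0
          · subst hℓ
            simp only [hb, if_pos rfl, true_and]
            rw [Finset.sum_ite_eq' Finset.univ j0, if_pos (Finset.mem_univ _)]
          · simp [hb, hℓ]
        unfold baryDual
        simp only [hKtEq, hMid]
      have hD' := hD.congr_of_eventuallyEq (Filter.Eventually.of_forall hpt)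
      have hzero := hD'.unique (hdv ℓ0 j0 V hV)
      have hcollapse : ∀ ℓ : Fin L, w ℓ * (0 + b ℓ + ε * ∑ i, ∑ j',
          (mexp (Kt c ρ ε (u ℓ) (v ℓ) i j') * Wv ℓ j').trace)
          = if ℓ = ℓ0 then w ℓ0 * ((ν j0 * V).trace
              - ∑ i, (mexp (Kt c ρ ε (u ℓ0) (v ℓ0) i j0) * V).trace) else 0 := by
        intro ℓ
        by_cases hℓ : ℓ = ℓ0
        · subst hℓ
          rw [if_pos rfl]
          have hWv' : ∀ (i : I) (j' : J), (mexp (Kt c ρ ε (u ℓ) (v ℓ) i j') * Wv ℓ j').trace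
              = if j' = j0 then (-ε⁻¹) * (mexp (Kt c ρ ε (u ℓ) (v ℓ) i j') * V).trace else 0 := by
            intro i j'
            by_cases hj : j' = j0
            · simp only [hWv, hj, and_self, if_pos rfl, true_and, if_true]
              rw [mul_smul_comm, Matrix.trace_smul, smul_eq_mul]
            · simp [hWv, hj]
          simp only [hWv']
          rw [Finset.sum_congr rfl (fun i _ => by
            rw [Finset.sum_ite_eq' Finset.univ j0, if_pos (Finset.mem_univ _)])]
          rw [hb]
          simp only [eq_self_iff_true, if_true]
          rw [← Finset.mul_sum, zero_add]
          have hee : ε * ((-ε⁻¹) * (∑ i, (mexp (Kt c ρ ε (u ℓ) (v ℓ) i j0) * V).trace))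
              = -(∑ i, (mexp (Kt c ρ ε (u ℓ) (v ℓ) i j0) * V).trace) := by
            field_simp
          rw [hee]
          ring
        · rw [if_neg hℓ]
          have hz : ∀ (i : I) (j' : J),
              (mexp (Kt c ρ ε (u ℓ) (v ℓ) i j') * Wv ℓ j').trace = 0 := by
            intro i j'; simp [hWv, hℓ]
          simp [hz, hb, hℓ]
      rw [Finset.sum_congr rfl (fun ℓ _ => hcollapse ℓ),
        Finset.sum_ite_eq' Finset.univ ℓ0, if_pos (Finset.mem_univ _)] at hzero
      have hw0 : w ℓ0 ≠ 0 := ne_of_gt (hw ℓ0)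
      have heq : (ν j0 * V).trace
          = ∑ i, (mexp (Kt c ρ ε (u ℓ0) (v ℓ0) i j0) * V).trace := by
        have h1 := neg_eq_zero.mp hzero
        rcases mul_eq_zero.mp h1 with h | h
        · exact absurd h hw0
        · exact sub_eq_zero.mp h
      rw [Matrix.sub_mul, Matrix.trace_sub, heq, Matrix.sum_mul, Matrix.trace_sum, sub_self]
    have hherm : (ν j0 - ∑ i, mexp (Kt c ρ ε (u ℓ0) (v ℓ0) i j0)).IsHermitian :=
      (hν j0).1.sub (hSherm ℓ0 j0)
    exact sub_eq_zero.mp (QB.herm_eq_zero_of_trace_test hherm key)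
  -- Part (i): trace identity
  have part1trace : ∀ (ℓ0 : Fin L) (i0 : I), mexp (u ℓ0 i0 + mlog (μ ℓ0 i0))
      = ∑ j', mexp (Kt c ρ ε (u ℓ0) (v ℓ0) i0 j') := by
    intro ℓ0 i0
    have key : ∀ V : Matrix (Fin d) (Fin d) ℝ, V.IsHermitian →
        ((mexp (u ℓ0 i0 + mlog (μ ℓ0 i0))
          - ∑ j', mexp (Kt c ρ ε (u ℓ0) (v ℓ0) i0 j')) * V).trace = 0 := by
      intro V hV
      set Bu : Fin L → I → Matrix (Fin d) (Fin d) ℝ :=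
        fun ℓ i => if ℓ = ℓ0 ∧ i = i0 then V else 0 with hBu
      set Wu : Fin L → I → Matrix (Fin d) (Fin d) ℝ :=
        fun ℓ i => if ℓ = ℓ0 ∧ i = i0 then (-(ε⁻¹ * ρ)) • V else 0 with hWu
      have hD : HasDerivAt (fun t : ℝ => -∑ ℓ, w ℓ *
          ((ρ * ∑ i, (mexp ((u ℓ i + mlog (μ ℓ i)) + t • Bu ℓ i)).trace)
            + (∑ j', (ν j' * v ℓ j').trace)
            + ε * ∑ i, ∑ j', (mexp (Kt c ρ ε (u ℓ) (v ℓ) i j' + t • Wu ℓ i)).trace))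
          (-∑ ℓ, w ℓ * ((ρ * ∑ i, (mexp (u ℓ i + mlog (μ ℓ i)) * Bu ℓ i).trace)
            + 0
            + ε * ∑ i, ∑ j', (mexp (Kt c ρ ε (u ℓ) (v ℓ) i j') * Wu ℓ i).trace)) 0 := by
        apply HasDerivAt.neg
        apply HasDerivAt.fun_sum
        intro ℓ _
        apply HasDerivAt.const_mul
        apply HasDerivAt.add
        apply HasDerivAt.add
        · apply HasDerivAt.const_mul
          apply HasDerivAt.fun_sum
          intro i _
          exact QB.hasDerivAt_trace_mexp _ _
        · exact hasDerivAt_const _ _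
        · apply HasDerivAt.const_mul
          apply HasDerivAt.fun_sum
          intro i _
          apply HasDerivAt.fun_sum
          intro j' _
          exact QB.hasDerivAt_trace_mexp _ _
      have hpt : ∀ t : ℝ, baryDual c ρ ε w μ
          (fun ℓ' i' => u ℓ' i' + if ℓ' = ℓ0 ∧ i' = i0 then t • V else 0) v ν
          = -∑ ℓ, w ℓ *
          ((ρ * ∑ i, (mexp ((u ℓ i + mlog (μ ℓ i)) + t • Bu ℓ i)).trace)
            + (∑ j', (ν j' * v ℓ j').trace)
            + ε * ∑ i, ∑ j', (mexp (Kt c ρ ε (u ℓ) (v ℓ) i j' + t • Wu ℓ i)).trace) := by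
        intro t
        have hArg : ∀ (ℓ : Fin L) (i : I),
            (u ℓ i + if ℓ = ℓ0 ∧ i = i0 then t • V else 0) + mlog (μ ℓ i)
              = (u ℓ i + mlog (μ ℓ i)) + t • Bu ℓ i := by
          intro ℓ i
          by_cases hP : ℓ = ℓ0 ∧ i = i0
          · simp only [hBu, if_pos hP]
            abel
          · simp [hBu, hP]
        have hKtEq : ∀ (ℓ : Fin L) (i : I) (j' : J),
            Kt c ρ ε (fun i' => u ℓ i' + if ℓ = ℓ0 ∧ i' = i0 then t • V else 0) (v ℓ) i j'
              = Kt c ρ ε (u ℓ) (v ℓ) i j' + t • Wu ℓ i := by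
          intro ℓ i j'
          unfold Kt
          by_cases hP : ℓ = ℓ0 ∧ i = i0
          · simp only [hWu, if_pos hP, smul_add]
            module
          · simp [hWu, hP]
        unfold baryDual
        simp only [hArg, hKtEq]
      have hD' := hD.congr_of_eventuallyEq (Filter.Eventually.of_forall hpt)
      have hzero := hD'.unique (hdu ℓ0 i0 V hV)
      have hcollapse : ∀ ℓ : Fin L, w ℓ *
          ((ρ * ∑ i, (mexp (u ℓ i + mlog (μ ℓ i)) * Bu ℓ i).trace)
            + 0
            + ε * ∑ i, ∑ j', (mexp (Kt c ρ ε (u ℓ) (v ℓ) i j') * Wu ℓ i).trace)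
          = if ℓ = ℓ0 then w ℓ0 * (ρ * ((mexp (u ℓ0 i0 + mlog (μ ℓ0 i0)) * V).trace
              - ∑ j', (mexp (Kt c ρ ε (u ℓ0) (v ℓ0) i0 j') * V).trace)) else 0 := by
        intro ℓ
        by_cases hℓ : ℓ = ℓ0
        · subst hℓ
          rw [if_pos rfl]
          have hB1 : ∀ i : I, (mexp (u ℓ i + mlog (μ ℓ i)) * Bu ℓ i).trace
              = if i = i0 then (mexp (u ℓ i + mlog (μ ℓ i)) * V).trace else 0 := by
            intro i
            by_cases hi : i = i0
            · simp [hBu, hi]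
            · simp [hBu, hi]
          have hW1 : ∀ (i : I) (j' : J), (mexp (Kt c ρ ε (u ℓ) (v ℓ) i j') * Wu ℓ i).trace
              = if i = i0 then (-(ε⁻¹ * ρ)) * (mexp (Kt c ρ ε (u ℓ) (v ℓ) i j') * V).trace
                else 0 := by
            intro i j'
            by_cases hi : i = i0
            · simp only [hWu, hi, and_self, if_pos rfl, true_and, if_true]
              rw [mul_smul_comm, Matrix.trace_smul, smul_eq_mul]
            · simp [hWu, hi]
          simp only [hB1, hW1]
          rw [Finset.sum_ite_eq' Finset.univ i0, if_pos (Finset.mem_univ _)]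
          have hinner : ∀ i : I, (∑ j', if i = i0
              then (-(ε⁻¹ * ρ)) * (mexp (Kt c ρ ε (u ℓ) (v ℓ) i j') * V).trace else 0)
              = if i = i0 then ∑ j', (-(ε⁻¹ * ρ))
                  * (mexp (Kt c ρ ε (u ℓ) (v ℓ) i j') * V).trace else 0 := by
            intro i
            split_ifs <;> simp
          rw [Finset.sum_congr rfl (fun i _ => hinner i),
            Finset.sum_ite_eq' Finset.univ i0, if_pos (Finset.mem_univ _),
            ← Finset.mul_sum]
          have hee : ε * ((-(ε⁻¹ * ρ)) * (∑ j', (mexp (Kt c ρ ε (u ℓ) (v ℓ) i0 j') * V).trace))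
              = -(ρ * ∑ j', (mexp (Kt c ρ ε (u ℓ) (v ℓ) i0 j') * V).trace) := by
            field_simp
          rw [hee]
          ring
        · rw [if_neg hℓ]
          have hz1 : ∀ i : I, (mexp (u ℓ i + mlog (μ ℓ i)) * Bu ℓ i).trace = 0 := by
            intro i; simp [hBu, hℓ]
          have hz2 : ∀ (i : I) (j' : J),
              (mexp (Kt c ρ ε (u ℓ) (v ℓ) i j') * Wu ℓ i).trace = 0 := by
            intro i j'; simp [hWu, hℓ]
          simp [hz1, hz2]
      rw [Finset.sum_congr rfl (fun ℓ _ => hcollapse ℓ),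
        Finset.sum_ite_eq' Finset.univ ℓ0, if_pos (Finset.mem_univ _)] at hzero
      have hw0 : w ℓ0 ≠ 0 := ne_of_gt (hw ℓ0)
      have heq : (mexp (u ℓ0 i0 + mlog (μ ℓ0 i0)) * V).trace
          = ∑ j', (mexp (Kt c ρ ε (u ℓ0) (v ℓ0) i0 j') * V).trace := by
        have h1 := neg_eq_zero.mp hzero
        rcases mul_eq_zero.mp h1 with h | h
        · exact absurd h hw0
        · rcases mul_eq_zero.mp h with h2 | h2
          · exact absurd h2 hρne
          · exact sub_eq_zero.mp h2
      rw [Matrix.sub_mul, Matrix.trace_sub, heq, Matrix.sum_mul, Matrix.trace_sum, sub_self]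
    have hEherm : (mexp (u ℓ0 i0 + mlog (μ ℓ0 i0))).IsHermitian :=
      QB.mexp_isHermitian ((hu ℓ0 i0).add (QB.mlog_isHermitian _))
    have hherm : (mexp (u ℓ0 i0 + mlog (μ ℓ0 i0))
        - ∑ j', mexp (Kt c ρ ε (u ℓ0) (v ℓ0) i0 j')).IsHermitian :=
      hEherm.sub (hSherm' ℓ0 i0)
    exact sub_eq_zero.mp (QB.herm_eq_zero_of_trace_test hherm key)
  refine ⟨?_, part2, part3⟩
  intro ℓ i
  have hA1herm : (u ℓ i + mlog (μ ℓ i)).IsHermitian := (hu ℓ i).add (QB.mlog_isHermitian _)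
  have hlog : mlog (∑ j, mexp (Kt c ρ ε (u ℓ) (v ℓ) i j)) = u ℓ i + mlog (μ ℓ i) := by
    rw [← part1trace ℓ i]
    exact QB.mlog_mexp hA1herm
  rw [hlog, add_sub_cancel_right]
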